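/- Let p, q, r, s, t, q be integers with s·r − (t+1)·q = 1, s ≥ 1, t ≥ 0, and q ≥ 2. Then s·r − t·q = q + 1. Consequently, in the free group F = ⟨x,y⟩, the element (x·y^q)^d · x · y^{s·r − t·q} equals (x·y^q)^d · x · y^{q+1} for every non-negative integer d, and this element is primitive in F. -/

import Mathlib

/-- An element of the free group `F = ⟨x, y⟩` (generator `true` = `x`,
`false` = `y`) is *primitive* if it belongs to some generating pair of `F`. -/
def IsPrimitive (w : FreeGroup Bool) : Prop :=
  ∃ w' : FreeGroup Bool, Subgroup.closure {w, w'} = ⊤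

/-- If `s·r − (t+1)·q = 1` with `s ≥ 1`, `t ≥ 0` and `q ≥ 2`, then
`s·r − t·q = q + 1`; consequently in `F = ⟨x, y⟩` the element
`(x·y^q)^d · x · y^{s·r − t·q}` equals `(x·y^q)^d · x · y^{q+1}` for every `d ≥ 0`,
and this element is primitive. -/
theorem final_word_primitive (r s t q : ℤ)
    (h : s * r - (t + 1) * q = 1) (hs : 1 ≤ s) (ht : 0 ≤ t) (hq : 2 ≤ q) :
    s * r - t * q = q + 1 ∧
    ∀ d : ℕ,
      (FreeGroup.of true * (FreeGroup.of false) ^ q) ^ d * FreeGroup.of true *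
          (FreeGroup.of false) ^ (s * r - t * q) =
        (FreeGroup.of true * (FreeGroup.of false) ^ q) ^ d * FreeGroup.of true *
          (FreeGroup.of false) ^ (q + 1) ∧
      IsPrimitive
        ((FreeGroup.of true * (FreeGroup.of false) ^ q) ^ d * FreeGroup.of true *
          (FreeGroup.of false) ^ (s * r - t * q)) := by
  have harith : s * r - t * q = q + 1 := by linarith
  refine ⟨harith, fun d => ?_⟩
  rw [harith]
  set x := FreeGroup.of true
  set y := FreeGroup.of false
  refine ⟨rfl, ?_⟩
  -- key identity : (x*y^q)^d * x * y^(q+1) = (x*y^q)^(d+1) * y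
  have key : (x * y ^ q) ^ d * x * y ^ (q + 1) = (x * y ^ q) ^ (d + 1) * y := by
    rw [pow_succ]
    group
  refine ⟨x * y ^ q, ?_⟩
  set w := (x * y ^ q) ^ d * x * y ^ (q + 1) with hw
  set H := Subgroup.closure {w, x * y ^ q} with hH
  have hwH : w ∈ H := Subgroup.subset_closure (by left; rfl)
  have hzH : x * y ^ q ∈ H := Subgroup.subset_closure (by right; rfl)
  have hyH : y ∈ H := by
    have : ((x * y ^ q) ^ (d + 1))⁻¹ * w ∈ H :=
      H.mul_mem (H.inv_mem (H.pow_mem hzH (d + 1))) hwH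
    rwa [key, inv_mul_cancel_left] at this
  have hxH : x ∈ H := by
    have : (x * y ^ q) * (y ^ q)⁻¹ ∈ H :=
      H.mul_mem hzH (H.inv_mem (H.zpow_mem hyH q))
    rwa [mul_inv_cancel_right] at this
  have hall : ∀ g : FreeGroup Bool, g ∈ H := by
    intro g
    induction g using FreeGroup.induction_on with
    | C1 => exact H.one_mem
    | of b => cases b <;> assumption
    | inv_of b hb => exact H.inv_mem hb
    | mul a b ha hb => exact H.mul_mem ha hb
  exact eq_top_iff.2 fun g _ => hall g
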